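/- Assume c = Θ* z + ε with E[ε | z] = 0, where Θ* ∈ ℝ^{n×d} is the true coefficient matrix, and let α be a real random variable independent of z and c. Let (z_t, (1+α_t) c_t), t = 1, 2, ..., be i.i.d. observations, where z_t, c_t, α_t have finite second moments and c_t and α_t have finite fourth moments, and assume Σ = E[z z^T] is nonsingular. Let Θ̂_T be a minimizer over Θ ∈ ℝ^{n×d} of the ordinary least squares objective f_T(Θ) = (1/T) Σ_{t=1}^T ‖(1+α_t) c_t − Θ z_t‖₂². Then Θ̂_T → (1 + E[α]) Θ* almost surely as T → ∞. -/

import Mathlib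

open MeasureTheory Matrix Finset ProbabilityTheory Filter

namespace MOMPaper

open scoped ENNReal Topology

private lemma enn1 : (1 : ℝ≥0∞) / 1 = 1 / 2 + 1 / 2 := by
  rw [ENNReal.div_add_div_same]
  norm_num
  exact (ENNReal.div_self (by norm_num) (by norm_num)).symm

private lemma enn2 : (1 : ℝ≥0∞) / 2 = 1 / 4 + 1 / 4 := by
  rw [ENNReal.div_add_div_same]
  rw [ENNReal.div_eq_div_iff (by norm_num) (by norm_num) (by norm_num) (by norm_num)]
  norm_num

private lemma integrable_mul_L2 {Ω : Type*} [MeasurableSpace Ω] {μ : Measure Ω}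
    [IsFiniteMeasure μ] {f g : Ω → ℝ}
    (hf : MemLp f 2 μ) (hg : MemLp g 2 μ) : Integrable (fun ω => f ω * g ω) μ := by
  have h : MemLp (f • g) 1 μ := hg.smul hf (hpqr := ⟨by simpa [one_div] using enn1.symm⟩)
  exact h.integrable le_rfl

private lemma memLp2_mul_L4 {Ω : Type*} [MeasurableSpace Ω] {μ : Measure Ω}
    {f g : Ω → ℝ}
    (hf : MemLp f 4 μ) (hg : MemLp g 4 μ) : MemLp (fun ω => f ω * g ω) 2 μ :=
  hg.smul hf (hpqr := ⟨by simpa [one_div] using enn2.symm⟩)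

private lemma normal_eq {n d : ℕ} (T : ℕ) (a : ℕ → Fin n → ℝ) (z : ℕ → Fin d → ℝ)
    (M : Matrix (Fin n) (Fin d) ℝ)
    (hmin : ∀ Θ : Matrix (Fin n) (Fin d) ℝ,
      ∑ t ∈ Finset.range T, ∑ i, (a t i - (M.mulVec (z t)) i) ^ 2 ≤
      ∑ t ∈ Finset.range T, ∑ i, (a t i - (Θ.mulVec (z t)) i) ^ 2)
    (k : Fin n) (l : Fin d) :
    ∑ t ∈ Finset.range T, (a t k - (M.mulVec (z t)) k) * z t l = 0 := by
  set L := ∑ t ∈ Finset.range T, (a t k - (M.mulVec (z t)) k) * z t l with hLdef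
  set Q := ∑ t ∈ Finset.range T, (z t l) ^ 2 with hQdef
  have hQ0 : 0 ≤ Q := Finset.sum_nonneg fun t _ => sq_nonneg _
  have key : ∀ s : ℝ, 0 ≤ -2 * s * L + s ^ 2 * Q := by
    intro s
    have hmv : ∀ t i, ((M + s • Matrix.single k l 1).mulVec (z t)) i
        = (M.mulVec (z t)) i + s * (if i = k then z t l else 0) := by
      intro t i
      rw [Matrix.add_mulVec, Matrix.smul_mulVec, Pi.add_apply, Pi.smul_apply,
        smul_eq_mul]
      congr 1
      simp [Matrix.mulVec, Matrix.single, dotProduct, ite_and, eq_comm]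
    have expand : ∀ t, (∑ i, (a t i - ((M + s • Matrix.single k l 1).mulVec (z t)) i) ^ 2)
        = (∑ i, (a t i - (M.mulVec (z t)) i) ^ 2)
          + (-2 * s * ((a t k - (M.mulVec (z t)) k) * z t l) + s ^ 2 * (z t l) ^ 2) := by
      intro t
      have h1 : ∀ i : Fin n, (a t i - ((M + s • Matrix.single k l 1).mulVec (z t)) i) ^ 2
          = (a t i - (M.mulVec (z t)) i) ^ 2
            + (if i = k then -2 * s * ((a t k - (M.mulVec (z t)) k) * z t l)
                + s ^ 2 * (z t l) ^ 2 else 0) := by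
        intro i
        rcases eq_or_ne i k with rfl | h
        · rw [hmv]; simp; ring
        · rw [hmv]; simp [h]
      rw [Finset.sum_congr rfl fun i _ => h1 i, Finset.sum_add_distrib,
        Finset.sum_ite_eq' Finset.univ k]
      simp
    have h := hmin (M + s • Matrix.single k l 1)
    rw [Finset.sum_congr rfl fun t _ => expand t, Finset.sum_add_distrib] at h
    have h2 : 0 ≤ ∑ t ∈ Finset.range T,
        (-2 * s * ((a t k - (M.mulVec (z t)) k) * z t l) + s ^ 2 * (z t l) ^ 2) := by linarith
    calc (0:ℝ) ≤ _ := h2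
      _ = -2 * s * L + s ^ 2 * Q := by
          rw [hLdef, hQdef, Finset.sum_add_distrib, Finset.mul_sum, Finset.mul_sum]
  rcases eq_or_lt_of_le hQ0 with hQz | hQp
  · have h := key L
    rw [← hQz] at h
    nlinarith [sq_nonneg L]
  · have h := key (L / Q)
    have heq : -2 * (L / Q) * L + (L / Q) ^ 2 * Q = -(L ^ 2 / Q) := by
      field_simp; ring
    rw [heq] at h
    have h2 : L ^ 2 / Q ≤ 0 := by linarith
    have h3 : L ^ 2 ≤ 0 := by
      by_contra hc
      push_neg at hc
      exact absurd (div_pos hc hQp) (not_lt.mpr h2)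
    exact pow_eq_zero_iff (by norm_num) |>.mp (le_antisymm h3 (sq_nonneg L))

private lemma eps_orth {d : ℕ} {Ω : Type*} [MeasurableSpace Ω] {μ : Measure Ω}
    [IsProbabilityMeasure μ]
    (z : Ω → Fin d → ℝ) (e : Ω → ℝ) (hz : Measurable z)
    (hcond : μ[e | MeasurableSpace.comap z inferInstance] =ᵐ[μ] 0)
    (he : Integrable e μ) (l : Fin d)
    (hez : Integrable (fun ω => z ω l * e ω) μ) :
    ∫ ω, z ω l * e ω ∂μ = 0 := by
  set m := MeasurableSpace.comap z inferInstance with hmdef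
  have hm : m ≤ _ := hz.comap_le
  haveI : SigmaFinite (μ.trim hm) := inferInstance
  have hsm : StronglyMeasurable[m] (fun ω => z ω l) :=
    ((measurable_pi_apply l).comp (comap_measurable z)).stronglyMeasurable
  have hmul : μ[(fun ω => z ω l) * e | m] =ᵐ[μ] (fun ω => z ω l) * μ[e | m] :=
    condExp_mul_of_stronglyMeasurable_left hsm hez he
  have h1 : ∫ ω, z ω l * e ω ∂μ = ∫ ω, (μ[(fun ω => z ω l) * e | m]) ω ∂μ :=
    (integral_condExp hm (f := (fun ω => z ω l) * e)).symm
  rw [h1]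
  have h2 : μ[(fun ω => z ω l) * e | m] =ᵐ[μ] 0 := by
    refine hmul.trans ?_
    filter_upwards [hcond] with ω hω
    simp [hω]
  rw [integral_congr_ae h2]
  simp

private lemma slln_comp {Ω : Type*} [MeasurableSpace Ω] {μ : Measure Ω} {β : Type*}
    [MeasurableSpace β]
    (X : ℕ → Ω → β) (g : β → ℝ) (hg : Measurable g)
    (hindep : iIndepFun X μ)
    (hident : ∀ t, IdentDistrib (X t) (X 0) μ μ)
    (hint : Integrable (fun ω => g (X 0 ω)) μ) :
    ∀ᵐ ω ∂μ, Tendsto (fun T : ℕ => (∑ t ∈ Finset.range T, g (X t ω)) / T) atTop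
      (𝓝 (∫ ω, g (X 0 ω) ∂μ)) :=
  strong_law_ae_real (fun t ω => g (X t ω)) hint
    (fun _ _ hij => ((hindep.indepFun hij).comp hg hg))
    (fun t => (hident t).comp hg)

set_option maxHeartbeats 2000000 in
/-- scale consistency of ordinary least squares. With i.i.d.
    observations (z_t, (1+α_t)c_t) from the model c = Θ* z + ε, E[ε|z] = 0,
    scale noise α independent of (z,c), suitable moments, and nonsingular
    Σ = E[zzᵀ], any sequence of OLS minimizers Θ̂_T converges a.s. to
    (1 + E[α]) Θ*. -/
theorem ols_scale_consistency
    {n d : ℕ} {Ω : Type*} [MeasurableSpace Ω]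
    (μ : Measure Ω) [IsProbabilityMeasure μ]
    (zs : ℕ → Ω → Fin d → ℝ) (cs : ℕ → Ω → Fin n → ℝ)
    (εs : ℕ → Ω → Fin n → ℝ) (αs : ℕ → Ω → ℝ)
    (Θstar : Matrix (Fin n) (Fin d) ℝ)
    (hmeas : ∀ t, Measurable (fun ω => (zs t ω, cs t ω, αs t ω)))
    (hmodel : ∀ t ω, cs t ω = Θstar.mulVec (zs t ω) + εs t ω)
    (hcond : ∀ t i,
      μ[(fun ω => εs t ω i) | MeasurableSpace.comap (zs t) inferInstance] =ᵐ[μ] 0)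
    (hindepα : ∀ t, IndepFun (fun ω => (zs t ω, cs t ω)) (αs t) μ)
    (hiid_indep : iIndepFun
      (fun t ω => (zs t ω, cs t ω, αs t ω)) μ)
    (hiid_ident : ∀ t, IdentDistrib (fun ω => (zs t ω, cs t ω, αs t ω))
      (fun ω => (zs 0 ω, cs 0 ω, αs 0 ω)) μ μ)
    (hz2 : ∀ t i, MemLp (fun ω => zs t ω i) 2 μ)
    (hc2 : ∀ t i, MemLp (fun ω => cs t ω i) 2 μ)
    (hα2 : ∀ t, MemLp (αs t) 2 μ)
    (hc4 : ∀ t i, MemLp (fun ω => cs t ω i) 4 μ)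
    (hα4 : ∀ t, MemLp (αs t) 4 μ)
    (hSig : IsUnit (Matrix.of fun i j => ∫ ω, zs 0 ω i * zs 0 ω j ∂μ).det)
    (Θhat : ℕ → Ω → Matrix (Fin n) (Fin d) ℝ)
    (hmin : ∀ T : ℕ, 0 < T → ∀ ω, ∀ Θ : Matrix (Fin n) (Fin d) ℝ,
      (1 / (T : ℝ)) * ∑ t ∈ Finset.range T,
          ∑ i, ((1 + αs t ω) * cs t ω i - ((Θhat T ω).mulVec (zs t ω)) i) ^ 2 ≤
        (1 / (T : ℝ)) * ∑ t ∈ Finset.range T,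
          ∑ i, ((1 + αs t ω) * cs t ω i - (Θ.mulVec (zs t ω)) i) ^ 2) :
    ∀ᵐ ω ∂μ, Tendsto (fun T => Θhat T ω) atTop
      (nhds ((1 + ∫ ω', αs 0 ω' ∂μ) • Θstar)) := by
  classical
  have hzm : ∀ t, Measurable (zs t) := fun t => measurable_fst.comp (hmeas t)
  set Sig : Matrix (Fin d) (Fin d) ℝ :=
    Matrix.of fun i j => ∫ ω, zs 0 ω i * zs 0 ω j ∂μ with hSigdef
  set Eα : ℝ := ∫ ω', αs 0 ω' ∂μ with hEαdef
  set Blim : Matrix (Fin n) (Fin d) ℝ := (1 + Eα) • (Θstar * Sig) with hBlimdef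
  -- integrabilities
  have hzz_int : ∀ i j : Fin d, Integrable (fun ω => zs 0 ω i * zs 0 ω j) μ :=
    fun i j => integrable_mul_L2 (hz2 0 i) (hz2 0 j)
  have h1α4 : MemLp (fun ω => 1 + αs 0 ω) 4 μ := (memLp_const (1:ℝ)).add (hα4 0)
  have h1αc2 : ∀ k, MemLp (fun ω => (1 + αs 0 ω) * cs 0 ω k) 2 μ :=
    fun k => memLp2_mul_L4 h1α4 (hc4 0 k)
  have hB_int : ∀ (k : Fin n) (l : Fin d),
      Integrable (fun ω => ((1 + αs 0 ω) * cs 0 ω k) * zs 0 ω l) μ :=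
    fun k l => integrable_mul_L2 (h1αc2 k) (hz2 0 l)
  have hε2 : ∀ k : Fin n, MemLp (fun ω => εs 0 ω k) 2 μ := by
    intro k
    have heq : (fun ω => εs 0 ω k) = fun ω => cs 0 ω k - ∑ m, Θstar k m * zs 0 ω m := by
      funext ω
      have h2 : εs 0 ω k = cs 0 ω k - Θstar.mulVec (zs 0 ω) k := by
        rw [hmodel 0 ω]; simp
      rw [h2]; simp [Matrix.mulVec, dotProduct]
    rw [heq]
    exact (hc2 0 k).sub (memLp_finset_sum _ fun m _ => (hz2 0 m).const_mul _)
  -- SLLN for the empirical second-moment matrix entries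
  have hSconv : ∀ i j : Fin d, ∀ᵐ ω ∂μ,
      Tendsto (fun T : ℕ => (∑ t ∈ Finset.range T, zs t ω i * zs t ω j) / T) atTop
        (𝓝 (Sig i j)) := by
    intro i j
    have hg : Measurable (fun p : (Fin d → ℝ) × (Fin n → ℝ) × ℝ => p.1 i * p.1 j) := by
      fun_prop
    have h := slln_comp (fun t ω => (zs t ω, cs t ω, αs t ω))
      (fun p => p.1 i * p.1 j) hg hiid_indep hiid_ident (by exact hzz_int i j)
    have hval : (∫ ω, (fun p : (Fin d → ℝ) × (Fin n → ℝ) × ℝ => p.1 i * p.1 j)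
        (zs 0 ω, cs 0 ω, αs 0 ω) ∂μ) = Sig i j := rfl
    rw [hval] at h
    exact h
  -- orthogonality of noise
  have hεz : ∀ (k : Fin n) (l : Fin d), ∫ ω, zs 0 ω l * εs 0 ω k ∂μ = 0 := by
    intro k l
    exact eps_orth (zs 0) (fun ω => εs 0 ω k) (hzm 0) (hcond 0 k)
      ((hε2 k).integrable one_le_two) l (integrable_mul_L2 (hz2 0 l) (hε2 k))
  -- value of the cross-moment
  have hcz : ∀ (k : Fin n) (l : Fin d),
      ∫ ω, cs 0 ω k * zs 0 ω l ∂μ = ∑ m, Θstar k m * Sig m l := by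
    intro k l
    have heq : (fun ω => cs 0 ω k * zs 0 ω l)
        = fun ω => (∑ m, Θstar k m * (zs 0 ω m * zs 0 ω l)) + zs 0 ω l * εs 0 ω k := by
      funext ω
      have h2 : cs 0 ω k = (∑ m, Θstar k m * zs 0 ω m) + εs 0 ω k := by
        rw [hmodel 0 ω]; simp [Matrix.mulVec, dotProduct]
      rw [h2, add_mul, Finset.sum_mul]
      congr 1
      · exact Finset.sum_congr rfl fun m _ => by ring
      · ring
    have hint1 : ∀ m : Fin d, Integrable (fun ω => Θstar k m * (zs 0 ω m * zs 0 ω l)) μ :=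
      fun m => (hzz_int m l).const_mul _
    rw [heq, integral_add (integrable_finset_sum _ fun m _ => hint1 m)
        (integrable_mul_L2 (hz2 0 l) (hε2 k)),
      integral_finset_sum _ (fun m _ => hint1 m), hεz k l, add_zero]
    exact Finset.sum_congr rfl fun m _ => by rw [integral_const_mul]; rfl
  -- the limit of the B entries
  have hBval : ∀ (k : Fin n) (l : Fin d),
      ∫ ω, ((1 + αs 0 ω) * cs 0 ω k) * zs 0 ω l ∂μ = (1 + Eα) * ((Θstar * Sig) k l) := by
    intro k l
    have hre : (fun ω => ((1 + αs 0 ω) * cs 0 ω k) * zs 0 ω l)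
        = (fun ω => cs 0 ω k * zs 0 ω l) * (fun ω => 1 + αs 0 ω) := by
      funext ω; simp only [Pi.mul_apply]; ring
    have hindep' : IndepFun (fun ω => cs 0 ω k * zs 0 ω l) (fun ω => 1 + αs 0 ω) μ := by
      have := (hindepα 0).comp
        (φ := fun p : (Fin d → ℝ) × (Fin n → ℝ) => p.2 k * p.1 l)
        (ψ := fun x : ℝ => 1 + x) (by fun_prop) (by fun_prop)
      exact this
    rw [hre, hindep'.integral_mul_eq_mul_integral
        (integrable_mul_L2 (hc2 0 k) (hz2 0 l)).aestronglyMeasurable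
        (h1α4.integrable (by norm_num)).aestronglyMeasurable]
    have h1 : ∫ ω, (1 + αs 0 ω) ∂μ = 1 + Eα := by
      rw [integral_add (integrable_const 1) ((hα2 0).integrable one_le_two)]
      simp [hEαdef]
    rw [hcz k l, h1, Matrix.mul_apply]
    ring
  have hBconv : ∀ (k : Fin n) (l : Fin d), ∀ᵐ ω ∂μ,
      Tendsto (fun T : ℕ => (∑ t ∈ Finset.range T, ((1 + αs t ω) * cs t ω k) * zs t ω l) / T)
        atTop (𝓝 ((1 + Eα) * ((Θstar * Sig) k l))) := by
    intro k l
    have hg : Measurable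
        (fun p : (Fin d → ℝ) × (Fin n → ℝ) × ℝ => ((1 + p.2.2) * p.2.1 k) * p.1 l) := by
      fun_prop
    have h := slln_comp (fun t ω => (zs t ω, cs t ω, αs t ω))
      (fun p => ((1 + p.2.2) * p.2.1 k) * p.1 l) hg hiid_indep hiid_ident
      (by exact hB_int k l)
    have hval : (∫ ω, (fun p : (Fin d → ℝ) × (Fin n → ℝ) × ℝ => ((1 + p.2.2) * p.2.1 k) * p.1 l)
        (zs 0 ω, cs 0 ω, αs 0 ω) ∂μ) = ∫ ω, ((1 + αs 0 ω) * cs 0 ω k) * zs 0 ω l ∂μ := rfl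
    rw [hval, hBval k l] at h
    exact h
  -- combine a.e. events
  have hall : ∀ᵐ ω ∂μ,
      (∀ i j : Fin d, Tendsto
        (fun T : ℕ => (∑ t ∈ Finset.range T, zs t ω i * zs t ω j) / T) atTop (𝓝 (Sig i j))) ∧
      (∀ (k : Fin n) (l : Fin d), Tendsto
        (fun T : ℕ => (∑ t ∈ Finset.range T, ((1 + αs t ω) * cs t ω k) * zs t ω l) / T)
        atTop (𝓝 ((1 + Eα) * ((Θstar * Sig) k l)))) :=
    ((ae_all_iff.2 fun i => ae_all_iff.2 fun j => hSconv i j).and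
      (ae_all_iff.2 fun k => ae_all_iff.2 fun l => hBconv k l))
  filter_upwards [hall] with ω hω
  obtain ⟨hωS, hωB⟩ := hω
  set S : ℕ → Matrix (Fin d) (Fin d) ℝ := fun T =>
    Matrix.of fun i j => (∑ t ∈ Finset.range T, zs t ω i * zs t ω j) / T with hSdef
  set Bm : ℕ → Matrix (Fin n) (Fin d) ℝ := fun T =>
    Matrix.of fun k l => (∑ t ∈ Finset.range T, ((1 + αs t ω) * cs t ω k) * zs t ω l) / T
    with hBmdef
  have hS : Tendsto S atTop (𝓝 Sig) :=
    tendsto_pi_nhds.2 fun i => tendsto_pi_nhds.2 fun j => hωS i j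
  have hB : Tendsto Bm atTop (𝓝 Blim) := by
    refine tendsto_pi_nhds.2 fun k => tendsto_pi_nhds.2 fun l => ?_
    have h := hωB k l
    have : Blim k l = (1 + Eα) * ((Θstar * Sig) k l) := by
      rw [hBlimdef]; simp [Matrix.smul_apply]
    rw [show (fun T => Bm T k l) = fun T : ℕ =>
      (∑ t ∈ Finset.range T, ((1 + αs t ω) * cs t ω k) * zs t ω l) / T from rfl, this]
    exact h
  have hdetne : Sig.det ≠ 0 := by
    intro h0
    exact (isUnit_iff_ne_zero.mp hSig) h0
  have hTdet : Tendsto (fun T => (S T).det) atTop (𝓝 Sig.det) :=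
    ((continuous_id.matrix_det).tendsto Sig).comp hS
  have hinv : Tendsto (fun T => (S T)⁻¹) atTop (𝓝 Sig⁻¹) := by
    have hc : ContinuousAt Inv.inv Sig := by
      refine continuousAt_matrix_inv Sig ?_
      rw [Ring.inverse_eq_inv']
      exact continuousAt_inv₀ hdetne
    exact hc.tendsto.comp hS
  have hmulT : Tendsto (fun T => Bm T * (S T)⁻¹) atTop (𝓝 (Blim * Sig⁻¹)) := by
    have hcont : Continuous
        (fun p : Matrix (Fin n) (Fin d) ℝ × Matrix (Fin d) (Fin d) ℝ => p.1 * p.2) :=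
      continuous_fst.matrix_mul continuous_snd
    exact (hcont.tendsto (Blim, Sig⁻¹)).comp (hB.prodMk_nhds hinv)
  -- normal equations
  have hnorm : ∀ T : ℕ, 0 < T → Θhat T ω * S T = Bm T := by
    intro T hT
    have hmin' : ∀ Θ : Matrix (Fin n) (Fin d) ℝ,
        ∑ t ∈ Finset.range T,
            ∑ i, ((1 + αs t ω) * cs t ω i - ((Θhat T ω).mulVec (zs t ω)) i) ^ 2 ≤
          ∑ t ∈ Finset.range T,
            ∑ i, ((1 + αs t ω) * cs t ω i - (Θ.mulVec (zs t ω)) i) ^ 2 := by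
      intro Θ
      have h := hmin T hT ω Θ
      have hTpos : (0:ℝ) < 1 / T := by positivity
      exact (mul_le_mul_iff_right₀ hTpos).mp h
    ext k l
    have hNE := normal_eq T (fun t i => (1 + αs t ω) * cs t ω i) (fun t => zs t ω)
      (Θhat T ω) hmin' k l
    have hsum : ∑ t ∈ Finset.range T, ((1 + αs t ω) * cs t ω k) * zs t ω l
        = ∑ t ∈ Finset.range T, ((Θhat T ω).mulVec (zs t ω) k) * zs t ω l := by
      rw [Finset.sum_congr rfl (fun t _ => sub_mul _ _ _), Finset.sum_sub_distrib] at hNE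
      linarith
    have eL : (Θhat T ω * S T) k l
        = (∑ t ∈ Finset.range T, ((Θhat T ω).mulVec (zs t ω) k) * zs t ω l) / T := by
      simp only [Matrix.mul_apply, hSdef, Matrix.of_apply, Matrix.mulVec, dotProduct,
        div_eq_mul_inv, Finset.sum_mul, Finset.mul_sum]
      rw [Finset.sum_comm]
      exact Finset.sum_congr rfl fun t _ => Finset.sum_congr rfl fun m _ => by ring
    rw [eL, ← hsum]
    rfl
  have hevne : ∀ᶠ T : ℕ in atTop, (S T).det ≠ 0 := hTdet.eventually_ne hdetne
  have hev : (fun T => Bm T * (S T)⁻¹) =ᶠ[atTop] (fun T => Θhat T ω) := by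
    filter_upwards [hevne, eventually_gt_atTop 0] with T h1 h2
    rw [← hnorm T h2,
      Matrix.mul_nonsing_inv_cancel_right _ _ (isUnit_iff_ne_zero.2 h1)]
  have hfinal : Blim * Sig⁻¹ = (1 + Eα) • Θstar := by
    rw [hBlimdef, Matrix.smul_mul,
      Matrix.mul_nonsing_inv_cancel_right _ _ (isUnit_iff_ne_zero.2 hdetne)]
  exact Filter.Tendsto.congr' hev (hfinal ▸ hmulT)

end MOMPaper
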